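/- (Residual large set.) Let q be a prime power and let 1 ≤ t ≤ k ≤ v−1 and N ≥ 2 be integers. If a large set LS_q[N](t,k,v) exists, then a large set LS_q[N](t−1, k, v−1) exists. -/

import Mathlib

open Module Set

/-- Gaussian binomial coefficient `[m choose r]_q`, via the q-Pascal recursion
`[m+1 choose r+1]_q = [m choose r]_q + q^(r+1) * [m choose r+1]_q`. -/
def gaussBinom (q : ℕ) : ℕ → ℕ → ℕ
  | _, 0 => 1
  | 0, _ + 1 => 0
  | m + 1, r + 1 => gaussBinom q m r + q ^ (r + 1) * gaussBinom q m (r + 1)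

/-- `B` is a `t`-`(v, k, lam)_q` subspace design in the ambient space `V`:
all blocks are `k`-dimensional subspaces and every `t`-dimensional subspace of `V`
lies in exactly `lam` blocks. -/
def IsSubspaceDesign {F V : Type*} [Field F] [AddCommGroup V] [Module F V]
    (t k lam : ℕ) (B : Set (Submodule F V)) : Prop :=
  (∀ W ∈ B, Module.finrank F W = k) ∧
  ∀ T : Submodule F V, Module.finrank F T = t → {W | W ∈ B ∧ T ≤ W}.ncard = lam

/-- `P` is a large set: a partition of the set of all `k`-dimensional subspaces of `V`
into `N` (pairwise disjoint) parts, each being a `t`-`(v, k, lam)_q` subspace design. -/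
def IsLargeSet {F V : Type*} [Field F] [AddCommGroup V] [Module F V]
    (N t k lam : ℕ) (P : Fin N → Set (Submodule F V)) : Prop :=
  (Pairwise fun i j => Disjoint (P i) (P j)) ∧
  (⋃ i, P i) = {W : Submodule F V | Module.finrank F W = k} ∧
  ∀ i, IsSubspaceDesign t k lam (P i)

/-- A large set `LS_q[N](t, k, v)` exists: for the `v`-dimensional vector space over
the field with `q` elements, the set of all `k`-dimensional subspaces can be
partitioned into `N` subspace designs with parameters `t`-`(v, k, lam)_q`, where
`lam = [v - t choose k - t]_q / N`. -/
def ExistsLargeSet (q N t k v : ℕ) : Prop :=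
  ∀ (F : Type) [Field F] [Fintype F], Fintype.card F = q →
    ∃ lam : ℕ, N * lam = gaussBinom q (v - t) (k - t) ∧
      ∃ P : Fin N → Set (Submodule F (Fin v → F)), IsLargeSet N t k lam P

/-- `1 + q + ... + q^(d-1)`. -/
def csum (q d : ℕ) : ℕ := ∑ i ∈ Finset.range d, q ^ i

lemma csum_succ (q d : ℕ) : csum q (d + 1) = csum q d + q ^ d := by
  simp [csum, Finset.sum_range_succ]

lemma csum_pos (q : ℕ) {d : ℕ} (hd : 0 < d) : 0 < csum q d := by
  obtain ⟨e, rfl⟩ := Nat.exists_eq_add_of_lt hd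
  induction e with
  | zero => simp [csum]
  | succ e ih => rw [← Nat.add_assoc, csum_succ]; omega

lemma csum_add (q a b : ℕ) : csum q (a + b) = csum q a + q ^ a * csum q b := by
  induction b with
  | zero => simp [csum]
  | succ b ih =>
    rw [← Nat.add_assoc, csum_succ, csum_succ, ih, pow_add]
    ring

lemma csum_mul_pred (q d : ℕ) (hq : 1 ≤ q) : csum q d * (q - 1) = q ^ d - 1 := by
  induction d with
  | zero => simp [csum]
  | succ d ih =>
    rw [csum_succ, Nat.add_mul, ih, pow_succ]
    have h1 : 1 ≤ q ^ d := Nat.one_le_pow _ _ hq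
    have h2 : q ^ d * (q - 1) = q ^ d * q - q ^ d := by
      rw [Nat.mul_sub, Nat.mul_one]
    have h3 : q ^ d ≤ q ^ d * q := Nat.le_mul_of_pos_right _ (by omega)
    omega

lemma gauss_eq_zero (q : ℕ) : ∀ {m r : ℕ}, m < r → gaussBinom q m r = 0 := by
  intro m
  induction m with
  | zero =>
    intro r h
    cases r with
    | zero => omega
    | succ r => rfl
  | succ m ih =>
    intro r h
    cases r with
    | zero => omega
    | succ r =>
      show gaussBinom q m r + q ^ (r + 1) * gaussBinom q m (r + 1) = 0
      rw [ih (by omega), ih (by omega)]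
      ring

lemma gauss_mul_csum (q : ℕ) : ∀ m r : ℕ,
    gaussBinom q m (r + 1) * csum q (r + 1) = gaussBinom q m r * csum q (m - r) := by
  intro m
  induction m with
  | zero =>
    intro r
    cases r with
    | zero => simp [gaussBinom, csum]
    | succ r => simp [gaussBinom, gauss_eq_zero q (by omega : 0 < r + 1)]
  | succ m ih =>
    -- helper H(m)
    have H : ∀ r : ℕ, gaussBinom q (m + 1) r * csum q (m + 1 - r)
        = gaussBinom q m r * csum q (m + 1) := by
      intro r
      cases r with
      | zero => simp [gaussBinom]
      | succ s =>
        show (gaussBinom q m s + q ^ (s + 1) * gaussBinom q m (s + 1)) * csum q (m + 1 - (s + 1)) = _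
        have h1 : m + 1 - (s + 1) = m - s := by omega
        rw [h1, Nat.add_mul, mul_assoc, ← ih s]
        rcases le_or_gt s m with hs | hs
        · have h2 : (s + 1) + (m - s) = m + 1 := by omega
          rw [← mul_assoc, mul_comm (q ^ (s+1)) (gaussBinom q m (s+1)), mul_assoc,
            ← Nat.mul_add, ← csum_add, h2]
        · rw [gauss_eq_zero q (by omega : m < s + 1)]
          ring
    intro r
    show (gaussBinom q m r + q ^ (r + 1) * gaussBinom q m (r + 1)) * csum q (r + 1) = _
    rw [Nat.add_mul, mul_assoc, ih r]
    rcases le_or_gt r m with hr | hr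
    · have h2 : (r + 1) + (m - r) = m + 1 := by omega
      rw [← mul_assoc, mul_comm (q ^ (r+1)) (gaussBinom q m r), mul_assoc, ← Nat.mul_add,
        ← csum_add, h2, ← H r]
    · rw [gauss_eq_zero q hr]
      rcases eq_or_lt_of_le (show m + 1 ≤ r by omega) with he | he
      · rw [← he]
        simp [csum]
      · rw [gauss_eq_zero q he]
        ring


lemma double_count {α β : Type*} [Finite α] [Finite β] (s : Set α) (t : Set β)
    (R : α → β → Prop) (m n : ℕ)
    (h1 : ∀ a ∈ s, {b | b ∈ t ∧ R a b}.ncard = m)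
    (h2 : ∀ b ∈ t, {a | a ∈ s ∧ R a b}.ncard = n) :
    s.ncard * m = t.ncard * n := by
  classical
  have : Fintype α := Fintype.ofFinite α
  have : Fintype β := Fintype.ofFinite β
  have key : ∀ (a : α), {b | b ∈ t ∧ R a b}.ncard = (t.toFinset.filter (R a)).card := by
    intro a
    rw [Set.ncard_eq_toFinset_card']
    congr 1
    ext b
    simp
  have key2 : ∀ (b : β), {a | a ∈ s ∧ R a b}.ncard = (s.toFinset.filter (fun a => R a b)).card := by
    intro b
    rw [Set.ncard_eq_toFinset_card']
    congr 1
    ext a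
    simp
  rw [Set.ncard_eq_toFinset_card' s, Set.ncard_eq_toFinset_card' t]
  calc s.toFinset.card * m = ∑ a ∈ s.toFinset, m := by rw [Finset.sum_const, smul_eq_mul, mul_comm]
    _ = ∑ a ∈ s.toFinset, (t.toFinset.filter (R a)).card := by
        apply Finset.sum_congr rfl
        intro a ha
        rw [← key a, h1 a (by simpa using ha)]
    _ = ∑ a ∈ s.toFinset, ∑ b ∈ t.toFinset, (if R a b then 1 else 0) := by
        rw [Finset.sum_congr rfl (fun a _ => Finset.card_filter _ _)]
    _ = ∑ b ∈ t.toFinset, ∑ a ∈ s.toFinset, (if R a b then 1 else 0) := Finset.sum_comm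
    _ = ∑ b ∈ t.toFinset, (s.toFinset.filter (fun a => R a b)).card := by
        rw [Finset.sum_congr rfl (fun a _ => Finset.card_filter _ _)]
    _ = ∑ b ∈ t.toFinset, n := by
        apply Finset.sum_congr rfl
        intro b hb
        rw [← key2 b, h2 b (by simpa using hb)]
    _ = t.toFinset.card * n := by rw [Finset.sum_const, smul_eq_mul, mul_comm]

section Counting

variable {F V : Type*} [Field F] [Fintype F] [AddCommGroup V] [Module F V]
  [FiniteDimensional F V] [Finite V]

instance : Finite (Submodule F V) :=
  Finite.of_injective (fun W => (W : Set V)) (SetLike.coe_injective)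

lemma ncard_submodule (W : Submodule F V) :
    (W : Set V).ncard = Fintype.card F ^ finrank F W := by
  classical
  have : Fintype V := Fintype.ofFinite V
  rw [← Nat.card_coe_set_eq, SetLike.coe_sort_coe, Nat.card_eq_fintype_card,
    Module.card_eq_pow_finrank (K := F)]

/-- The number of `(a+1)`-dimensional subspaces between `T` (dim `a`) and `U` (dim `b`)
is `csum q (b - a)`. -/
lemma count_intermediate (T U : Submodule F V) (hTU : T ≤ U) (a b : ℕ)
    (hT : finrank F T = a) (hU : finrank F U = b) :
    {T' : Submodule F V | finrank F T' = a + 1 ∧ T ≤ T' ∧ T' ≤ U}.ncard = csum (Fintype.card F) (b - a) := by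
  classical
  set q := Fintype.card F with hqdef
  have hq : 1 < q := Fintype.one_lt_card
  have hab : a ≤ b := by
    rw [← hT, ← hU]; exact Submodule.finrank_mono hTU
  -- double count pairs (x, T') with x ∈ U \ T, x ∈ T'
  have hdc := double_count ((U : Set V) \ (T : Set V))
    {T' : Submodule F V | finrank F T' = a + 1 ∧ T ≤ T' ∧ T' ≤ U}
    (fun x T' => x ∈ T') 1 (q ^ (a + 1) - q ^ a) ?_ ?_
  · -- conclude
    have hsn : ((U : Set V) \ (T : Set V)).ncard = q ^ b - q ^ a := by
      rw [Set.ncard_diff (by exact_mod_cast hTU), ncard_submodule, ncard_submodule, hT, hU]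
    rw [hsn, mul_one] at hdc
    have key : csum q (b - a) * (q ^ (a + 1) - q ^ a) = q ^ b - q ^ a := by
      have h1 : q ^ (a + 1) - q ^ a = q ^ a * (q - 1) := by
        rw [Nat.mul_sub, Nat.mul_one, ← pow_succ]
      rw [h1, ← mul_assoc, mul_comm (csum q (b-a)) (q ^ a), mul_assoc,
        csum_mul_pred _ _ (le_of_lt hq)]
      rw [Nat.mul_sub, Nat.mul_one, ← pow_add]
      congr 2
      omega
    have hpos : 0 < q ^ (a + 1) - q ^ a := by
      have : q ^ a < q ^ (a + 1) := Nat.pow_lt_pow_succ hq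
      omega
    exact Nat.eq_of_mul_eq_mul_right hpos (by rw [key, hdc])
  · -- fiber over x ∈ U \ T : unique T' = T ⊔ span x
    rintro x ⟨hxU, hxT⟩
    rw [Set.ncard_eq_one]
    refine ⟨T ⊔ Submodule.span F {x}, ?_⟩
    have hx0 : x ≠ 0 := fun h => hxT (h ▸ T.zero_mem)
    have hspan : finrank F (Submodule.span F {x} : Submodule F V) = 1 :=
      finrank_span_singleton hx0
    have hxmem : x ∈ T ⊔ Submodule.span F {x} :=
      Submodule.mem_sup_right (Submodule.mem_span_singleton_self x)
    have hlt : T < T ⊔ Submodule.span F {x} :=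
      lt_of_le_of_ne le_sup_left (fun h => hxT (h ▸ hxmem))
    have hdim : finrank F (T ⊔ Submodule.span F {x} : Submodule F V) = a + 1 := by
      have hge : a + 1 ≤ finrank F (T ⊔ Submodule.span F {x} : Submodule F V) := by
        rw [← hT]
        exact Submodule.finrank_lt_finrank_of_lt hlt
      have hle : finrank F (T ⊔ Submodule.span F {x} : Submodule F V) ≤ a + 1 := by
        have := Submodule.finrank_sup_add_finrank_inf_eq T (Submodule.span F {x})
        rw [hT, hspan] at this
        omega
      omega
    have hsupU : T ⊔ Submodule.span F {x} ≤ U :=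
      sup_le hTU ((Submodule.span_singleton_le_iff_mem x U).2 hxU)
    ext T'
    simp only [Set.mem_setOf_eq, Set.mem_singleton_iff]
    constructor
    · rintro ⟨⟨hT', hTT', hT'U⟩, hxT'⟩
      have hle : T ⊔ Submodule.span F {x} ≤ T' :=
        sup_le hTT' ((Submodule.span_singleton_le_iff_mem x T').2 hxT')
      exact (Submodule.eq_of_le_of_finrank_eq hle (by rw [hT', hdim])).symm
    · rintro rfl
      exact ⟨⟨hdim, le_sup_left, hsupU⟩, hxmem⟩
  · -- fiber over T' : the vectors of T' \ T
    rintro T' ⟨hT', hTT', hT'U⟩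
    have hset : {x | x ∈ (U : Set V) \ (T : Set V) ∧ x ∈ T'} = (T' : Set V) \ (T : Set V) := by
      ext x
      simp only [Set.mem_setOf_eq, Set.mem_diff, SetLike.mem_coe]
      exact ⟨fun ⟨⟨_, h2⟩, h3⟩ => ⟨h3, h2⟩, fun ⟨h1, h2⟩ => ⟨⟨hT'U h1, h2⟩, h1⟩⟩
    rw [hset, Set.ncard_diff (by exact_mod_cast hTT'), ncard_submodule, ncard_submodule, hT, hT']

lemma residual_count (B : Set (Submodule F V)) (t k lam v : ℕ)
    (ht : 1 ≤ t) (htk : t ≤ k) (hkv : k + 1 ≤ v) (hV : finrank F V = v)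
    (hdim : ∀ W ∈ B, finrank F W = k)
    (hdes : ∀ T : Submodule F V, finrank F T = t → {W | W ∈ B ∧ T ≤ W}.ncard = lam)
    (H : Submodule F V) (hH : finrank F H = v - 1)
    (T : Submodule F V) (hT : finrank F T = t - 1) (hTH : T ≤ H) :
    {W | W ∈ B ∧ T ≤ W ∧ W ≤ H}.ncard * csum (Fintype.card F) (k - t + 1)
      = lam * csum (Fintype.card F) (v - k) := by
  classical
  set q := Fintype.card F with hqdef
  have hq : 1 < q := Fintype.one_lt_card
  have htop : finrank F (⊤ : Submodule F V) = v := by rw [finrank_top, hV]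
  -- Step A : strength reduction
  have hE1 : {W | W ∈ B ∧ T ≤ W}.ncard * csum q (k - (t - 1))
      = csum q (v - (t - 1)) * lam := by
    have := double_count {W | W ∈ B ∧ T ≤ W}
      {T' : Submodule F V | finrank F T' = (t - 1) + 1 ∧ T ≤ T'}
      (fun W T' => T' ≤ W) (csum q (k - (t - 1))) lam ?_ ?_
    · rw [this]
      congr 1
      have heq : {T' : Submodule F V | finrank F T' = (t - 1) + 1 ∧ T ≤ T'}
          = {T' : Submodule F V | finrank F T' = (t - 1) + 1 ∧ T ≤ T' ∧ T' ≤ ⊤} := by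
        ext T'; simp
      rw [heq, count_intermediate T ⊤ le_top (t - 1) v hT htop]
    · rintro W ⟨hWB, hTW⟩
      have heq : {T' | T' ∈ {T' : Submodule F V | finrank F T' = (t - 1) + 1 ∧ T ≤ T'} ∧ T' ≤ W}
          = {T' : Submodule F V | finrank F T' = (t - 1) + 1 ∧ T ≤ T' ∧ T' ≤ W} := by
        ext T'; simp [Set.mem_setOf_eq, and_assoc]
      rw [heq, count_intermediate T W hTW (t - 1) k hT (hdim W hWB)]
    · rintro T' ⟨hT', hTT'⟩
      have heq : {W | W ∈ {W | W ∈ B ∧ T ≤ W} ∧ T' ≤ W} = {W | W ∈ B ∧ T' ≤ W} := by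
        ext W
        simp only [Set.mem_setOf_eq]
        exact ⟨fun ⟨⟨h1, _⟩, h3⟩ => ⟨h1, h3⟩, fun ⟨h1, h3⟩ => ⟨⟨h1, hTT'.trans h3⟩, h3⟩⟩
      rw [heq]
      exact hdes T' (by rw [hT']; omega)
  -- Step B : blocks not inside H
  have hE2 : {W | W ∈ B ∧ T ≤ W ∧ ¬ W ≤ H}.ncard * q ^ (k - t) = q ^ (v - t) * lam := by
    have key := double_count {W | W ∈ B ∧ T ≤ W ∧ ¬ W ≤ H}
      {T' : Submodule F V | (finrank F T' = (t - 1) + 1 ∧ T ≤ T') ∧ ¬ T' ≤ H}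
      (fun W T' => T' ≤ W) (q ^ (k - t)) lam ?_ ?_
    · rw [key]
      congr 1
      have heq : {T' : Submodule F V | (finrank F T' = (t - 1) + 1 ∧ T ≤ T') ∧ ¬ T' ≤ H}
          = {T' : Submodule F V | finrank F T' = (t - 1) + 1 ∧ T ≤ T' ∧ T' ≤ ⊤}
            \ {T' : Submodule F V | finrank F T' = (t - 1) + 1 ∧ T ≤ T' ∧ T' ≤ H} := by
        ext T'
        simp only [Set.mem_setOf_eq, Set.mem_diff]
        constructor
        · rintro ⟨⟨h1, h2⟩, h3⟩
          exact ⟨⟨h1, h2, le_top⟩, fun ⟨_, _, h⟩ => h3 h⟩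
        · rintro ⟨⟨h1, h2, _⟩, h3⟩
          exact ⟨⟨h1, h2⟩, fun h => h3 ⟨h1, h2, h⟩⟩
      rw [heq, Set.ncard_diff (fun T' => by
          rintro ⟨h1, h2, h3⟩; exact ⟨h1, h2, le_top⟩),
        count_intermediate T ⊤ le_top (t - 1) v hT htop,
        count_intermediate T H hTH (t - 1) (v - 1) hT hH]
      have h1 : v - (t - 1) = (v - t) + 1 := by omega
      have h2 : (v - 1) - (t - 1) = v - t := by omega
      rw [h1, h2, csum_succ]
      simp only [← hqdef]
      omega
    · rintro W ⟨hWB, hTW, hWH⟩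
      have hWk : finrank F W = k := hdim W hWB
      -- finrank (W ⊓ H) = k - 1
      have hsup : finrank F ((W ⊔ H : Submodule F V)) = v := by
        have hle : finrank F ((W ⊔ H : Submodule F V)) ≤ v := hV ▸ Submodule.finrank_le _
        have hlt : H < W ⊔ H := lt_of_le_of_ne le_sup_right (fun h => hWH (h ▸ le_sup_left))
        have := Submodule.finrank_lt_finrank_of_lt hlt
        omega
      have hinf : finrank F ((W ⊓ H : Submodule F V)) = k - 1 := by
        have := Submodule.finrank_sup_add_finrank_inf_eq W H
        rw [hsup, hWk, hH] at this
        omega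
      have heq : {T' | T' ∈ {T' : Submodule F V | (finrank F T' = (t - 1) + 1 ∧ T ≤ T') ∧ ¬ T' ≤ H} ∧ T' ≤ W}
          = {T' : Submodule F V | finrank F T' = (t - 1) + 1 ∧ T ≤ T' ∧ T' ≤ W}
            \ {T' : Submodule F V | finrank F T' = (t - 1) + 1 ∧ T ≤ T' ∧ T' ≤ W ⊓ H} := by
        ext T'
        simp only [Set.mem_setOf_eq, Set.mem_diff]
        constructor
        · rintro ⟨⟨⟨h1, h2⟩, h3⟩, h4⟩
          exact ⟨⟨h1, h2, h4⟩, fun ⟨_, _, h⟩ => h3 (h.trans inf_le_right)⟩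
        · rintro ⟨⟨h1, h2, h4⟩, h3⟩
          exact ⟨⟨⟨h1, h2⟩, fun h => h3 ⟨h1, h2, le_inf h4 h⟩⟩, h4⟩
      have hTWinf : T ≤ W ⊓ H := le_inf hTW hTH
      rw [heq, Set.ncard_diff (fun T' => by
          rintro ⟨h1, h2, h3⟩; exact ⟨h1, h2, h3.trans inf_le_left⟩),
        count_intermediate T W hTW (t - 1) k hT hWk,
        count_intermediate T (W ⊓ H) hTWinf (t - 1) (k - 1) hT hinf]
      have h1 : k - (t - 1) = (k - t) + 1 := by omega
      have h2 : (k - 1) - (t - 1) = k - t := by omega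
      rw [h1, h2, csum_succ]
      simp only [← hqdef]
      omega
    · rintro T' ⟨⟨hT', hTT'⟩, hT'H⟩
      have heq : {W | W ∈ {W | W ∈ B ∧ T ≤ W ∧ ¬ W ≤ H} ∧ T' ≤ W} = {W | W ∈ B ∧ T' ≤ W} := by
        ext W
        simp only [Set.mem_setOf_eq]
        constructor
        · rintro ⟨⟨h1, _, _⟩, h4⟩
          exact ⟨h1, h4⟩
        · rintro ⟨h1, h4⟩
          exact ⟨⟨h1, hTT'.trans h4, fun h => hT'H (h4.trans h)⟩, h4⟩
      rw [heq]
      exact hdes T' (by rw [hT']; omega)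
  -- Step C : combine
  have hBn : {W | W ∈ B ∧ T ≤ W ∧ ¬ W ≤ H}.ncard = q ^ (v - k) * lam := by
    have hpow : q ^ (v - t) = q ^ (v - k) * q ^ (k - t) := by
      rw [← pow_add]
      congr 1
      omega
    have hpos : 0 < q ^ (k - t) := Nat.pow_pos (by omega)
    apply Nat.eq_of_mul_eq_mul_right hpos
    rw [hE2, hpow]
    ring
  have hsplit : {W | W ∈ B ∧ T ≤ W}.ncard
      = {W | W ∈ B ∧ T ≤ W ∧ W ≤ H}.ncard + {W | W ∈ B ∧ T ≤ W ∧ ¬ W ≤ H}.ncard := by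
    rw [← Set.ncard_union_eq (by
        rw [Set.disjoint_left]
        rintro W ⟨_, _, h⟩ ⟨_, _, h'⟩
        exact h' h)]
    congr 1
    ext W
    simp only [Set.mem_setOf_eq, Set.mem_union]
    by_cases hWH : W ≤ H <;> tauto
  have hcs : csum q (v - (t - 1)) = csum q (v - k) + q ^ (v - k) * csum q (k - (t - 1)) := by
    have : v - (t - 1) = (v - k) + (k - (t - 1)) := by omega
    rw [this, csum_add]
  have hkt : k - (t - 1) = k - t + 1 := by omega
  rw [← hkt]
  have main : ({W | W ∈ B ∧ T ≤ W ∧ W ≤ H}.ncard + {W | W ∈ B ∧ T ≤ W ∧ ¬ W ≤ H}.ncard)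
        * csum q (k - (t - 1))
      = (csum q (v - k) + q ^ (v - k) * csum q (k - (t - 1))) * lam := by
    rw [← hsplit, ← hcs]
    exact hE1
  rw [hBn] at main
  apply Nat.add_right_cancel (m := q ^ (v - k) * lam * csum q (k - (t - 1)))
  calc {W | W ∈ B ∧ T ≤ W ∧ W ≤ H}.ncard * csum q (k - (t - 1))
        + q ^ (v - k) * lam * csum q (k - (t - 1))
      = ({W | W ∈ B ∧ T ≤ W ∧ W ≤ H}.ncard + q ^ (v - k) * lam) * csum q (k - (t - 1)) := by
        ring
    _ = (csum q (v - k) + q ^ (v - k) * csum q (k - (t - 1))) * lam := main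
    _ = lam * csum q (v - k) + q ^ (v - k) * lam * csum q (k - (t - 1)) := by ring

end Counting


/-- Residual large set: if a large set `LS_q[N](t, k, v)` exists (with
`1 ≤ t ≤ k ≤ v - 1` and `N ≥ 2`), then a large set `LS_q[N](t-1, k, v-1)` exists. -/
theorem existsLargeSet_residual (q N t k v : ℕ) (hq : IsPrimePow q)
    (ht : 1 ≤ t) (htk : t ≤ k) (hkv : k + 1 ≤ v) (hN : 2 ≤ N)
    (h : ExistsLargeSet q N t k v) :
    ExistsLargeSet q N (t - 1) k (v - 1) := by
  intro F _ _ hF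
  obtain ⟨lam, hlam, P, hdisj, hcover, hdes⟩ := h F hF
  classical
  subst hF
  set q := Fintype.card F with hqdef
  -- the embedding ι : F^(v-1) → F^v
  have hv2 : 2 ≤ v := by omega
  let g : Fin v → Fin (v - 1) := fun j =>
    if hj : (j : ℕ) < v - 1 then ⟨j, hj⟩ else ⟨0, by omega⟩
  have hg : Function.Surjective g := by
    intro i
    refine ⟨⟨(i : ℕ), by omega⟩, ?_⟩
    simp only [g]
    rw [dif_pos (by exact_mod_cast i.isLt)]
  let ι : (Fin (v - 1) → F) →ₗ[F] (Fin v → F) := LinearMap.funLeft F F g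
  have hι : Function.Injective ι := LinearMap.funLeft_injective_of_surjective F F g hg
  set H : Submodule F (Fin v → F) := LinearMap.range ι with hHdef
  have hH : finrank F H = v - 1 := by
    rw [LinearMap.finrank_range_of_inj hι, Module.finrank_fin_fun]
  have hmapdim : ∀ U : Submodule F (Fin (v - 1) → F), finrank F (U.map ι) = finrank F U :=
    fun U => (Submodule.equivMapOfInjective ι hι U).finrank_eq.symm
  -- the residual parts
  set P' : Fin N → Set (Submodule F (Fin (v - 1) → F)) :=
    fun i => {U | U.map ι ∈ P i} with hP'def
  -- key counting equality
  have hx : ∀ (i : Fin N) (T' : Submodule F (Fin (v - 1) → F)), finrank F T' = t - 1 →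
      {U | U ∈ P' i ∧ T' ≤ U}.ncard * csum q (k - t + 1) = lam * csum q (v - k) := by
    intro i T' hT'
    have himg : (fun U : Submodule F (Fin (v - 1) → F) => U.map ι) '' {U | U ∈ P' i ∧ T' ≤ U}
        = {W | W ∈ P i ∧ T'.map ι ≤ W ∧ W ≤ H} := by
      ext W
      simp only [Set.mem_image, Set.mem_setOf_eq]
      constructor
      · rintro ⟨U, ⟨hU, hT'U⟩, rfl⟩
        exact ⟨hU, Submodule.map_mono hT'U, LinearMap.map_le_range⟩
      · rintro ⟨hW, hTW, hWH⟩
        refine ⟨W.comap ι, ⟨?_, ?_⟩, ?_⟩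
        · show (W.comap ι).map ι ∈ P i
          rwa [Submodule.map_comap_eq_self hWH]
        · exact Submodule.map_le_iff_le_comap.1 hTW
        · exact Submodule.map_comap_eq_self hWH
    have hncard : {U | U ∈ P' i ∧ T' ≤ U}.ncard = {W | W ∈ P i ∧ T'.map ι ≤ W ∧ W ≤ H}.ncard := by
      rw [← himg, Set.ncard_image_of_injective _ (Submodule.map_injective_of_injective hι)]
    rw [hncard]
    exact residual_count (P i) t k lam v ht htk hkv (Module.finrank_fin_fun F)
      (hdes i).1 (hdes i).2 H hH (T'.map ι) (by rw [hmapdim, hT']) LinearMap.map_le_range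
  -- a (t-1)-dimensional subspace exists
  obtain ⟨T₀, hT₀⟩ : ∃ T₀ : Submodule F (Fin (v - 1) → F), finrank F T₀ = t - 1 := by
    have hle : t - 1 ≤ v - 1 := by omega
    refine ⟨Submodule.span F (Set.range ((Pi.basisFun F (Fin (v - 1))) ∘ Fin.castLE hle)), ?_⟩
    rw [finrank_span_eq_card (((Pi.basisFun F (Fin (v - 1))).linearIndependent).comp
      (Fin.castLE hle) (Fin.castLE_injective hle))]
    simp
  have hcpos : 0 < csum q (k - t + 1) := csum_pos q (by omega)
  -- the residual lambda
  have hdvd : csum q (k - t + 1) ∣ lam * csum q (v - k) :=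
    ⟨{U | U ∈ P' ⟨0, by omega⟩ ∧ T₀ ≤ U}.ncard, by
      rw [← hx ⟨0, by omega⟩ T₀ hT₀]
      ring⟩
  set lamr := lam * csum q (v - k) / csum q (k - t + 1) with hlamrdef
  have hlamr : lamr * csum q (k - t + 1) = lam * csum q (v - k) :=
    Nat.div_mul_cancel hdvd
  have hxeq : ∀ (i : Fin N) (T' : Submodule F (Fin (v - 1) → F)), finrank F T' = t - 1 →
      {U | U ∈ P' i ∧ T' ≤ U}.ncard = lamr := by
    intro i T' hT'
    exact Nat.eq_of_mul_eq_mul_right hcpos (by rw [hx i T' hT', hlamr])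
  refine ⟨lamr, ?_, P', ?_, ?_, ?_⟩
  · -- N * lamr = gaussBinom
    have hg1 : v - 1 - (t - 1) = v - t := by omega
    have hg2 : k - (t - 1) = k - t + 1 := by omega
    rw [hg1, hg2]
    apply Nat.eq_of_mul_eq_mul_right hcpos
    rw [mul_assoc, hlamr, gauss_mul_csum q (v - t) (k - t)]
    have hg3 : v - t - (k - t) = v - k := by omega
    rw [hg3, ← hlam]
    ring
  · -- pairwise disjoint
    intro i j hij
    rw [Set.disjoint_left]
    intro U hUi hUj
    exact Set.disjoint_left.1 (hdisj hij) hUi hUj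
  · -- union
    ext U
    simp only [Set.mem_iUnion, Set.mem_setOf_eq]
    have : (∃ i, U ∈ P' i) ↔ U.map ι ∈ ⋃ i, P i := by
      simp [hP'def]
    rw [this, hcover, Set.mem_setOf_eq, hmapdim]
  · -- designs
    intro i
    constructor
    · intro U hU
      rw [← hmapdim]
      exact (hdes i).1 (U.map ι) hU
    · intro T' hT'
      exact hxeq i T' hT'
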